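/- Let ψ : ℝ^{α+2} → ℝ and φ : ℝ^{β+2} → ℝ be c-Lipschitz for the sup metric, t > 1, M ≥ 1, and let ψ_t, φ_t satisfy |ψ_t(v) − ψ(v)| ≤ log_t M and |φ_t(v) − φ(v)| ≤ log_t M for all v. Let (x(i,j), y(i,j)) be the state dynamics for (ψ, φ) and (x'(i,j), y'(i,j)) the state dynamics for (ψ_t, φ_t), both with the same initial data (x_i)_i, (y^j)_j. Then for all i, j ≥ 0: |x(i,j+1) − x'(i,j+1)| ≤ P_{i+j(γ+1)}(c)·log_t M and |y(i+1,j) − y'(i+1,j)| ≤ P_{i+j(γ+1)}(c)·log_t M. -/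
import Mathlib

private lemma key_step7 {m : ℕ} {c L r : ℝ} (hc : 0 ≤ c) (hr : 0 ≤ r)
    (F Ft : (Fin (m + 2) → ℝ) → ℝ)
    (hF : ∀ v w, |F v - F w| ≤ c * dist v w)
    (hFt : ∀ v, |Ft v - F v| ≤ L)
    (v w : Fin (m + 2) → ℝ) (hvw : ∀ idx, |v idx - w idx| ≤ r) :
    |F v - Ft w| ≤ c * r + L := by
  have h1 : dist v w ≤ r := by
    rw [dist_pi_le_iff hr]
    intro idx
    rw [Real.dist_eq]; exact hvw idx
  calc |F v - Ft w| ≤ |F v - F w| + |F w - Ft w| := abs_sub_le _ _ _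
    _ ≤ c * r + L := by
        refine add_le_add ((hF v w).trans ?_) (by rw [abs_sub_comm]; exact hFt w)
        exact mul_le_mul_of_nonneg_left h1 hc

theorem statement7 (α β : ℕ) (c t M : ℝ) (hc : 0 ≤ c) (ht : 1 < t) (hM : 1 ≤ M)
    (ψ ψt : (Fin (α + 2) → ℝ) → ℝ) (φ φt : (Fin (β + 2) → ℝ) → ℝ)
    (hψ : ∀ v w : Fin (α + 2) → ℝ, |ψ v - ψ w| ≤ c * dist v w)
    (hφ : ∀ v w : Fin (β + 2) → ℝ, |φ v - φ w| ≤ c * dist v w)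
    (hψt : ∀ v : Fin (α + 2) → ℝ, |ψt v - ψ v| ≤ Real.log M / Real.log t)
    (hφt : ∀ v : Fin (β + 2) → ℝ, |φt v - φ v| ≤ Real.log M / Real.log t)
    (x0 y0 : ℕ → ℝ) (x y x' y' : ℕ → ℕ → ℝ)
    (hx0 : ∀ i, x i 0 = x0 i) (hy0 : ∀ j, y 0 j = y0 j)
    (hx : ∀ i j, x i (j + 1) = ψ (Fin.cons (y i j) (fun k : Fin (α + 1) => x (i + (k : ℕ)) j)))
    (hy : ∀ i j, y (i + 1) j = φ (Fin.cons (y i j) (fun k : Fin (β + 1) => x (i + (k : ℕ)) j)))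
    (hx0' : ∀ i, x' i 0 = x0 i) (hy0' : ∀ j, y' 0 j = y0 j)
    (hx' : ∀ i j, x' i (j + 1)
        = ψt (Fin.cons (y' i j) (fun k : Fin (α + 1) => x' (i + (k : ℕ)) j)))
    (hy' : ∀ i j, y' (i + 1) j
        = φt (Fin.cons (y' i j) (fun k : Fin (β + 1) => x' (i + (k : ℕ)) j))) :
    ∀ i j : ℕ,
      |x i (j + 1) - x' i (j + 1)|
          ≤ (∑ k ∈ Finset.range (i + j * (max α β + 1) + 1), c ^ k)
            * (Real.log M / Real.log t) ∧
      |y (i + 1) j - y' (i + 1) j|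
          ≤ (∑ k ∈ Finset.range (i + j * (max α β + 1) + 1), c ^ k)
            * (Real.log M / Real.log t) := by
  set γ := max α β with hγ
  set L := Real.log M / Real.log t with hLdef
  have hL : 0 ≤ L := div_nonneg (Real.log_nonneg hM) (Real.log_pos ht).le
  set S : ℕ → ℝ := fun n => ∑ k ∈ Finset.range n, c ^ k with hS
  have hS0 : ∀ n, 0 ≤ S n := fun n => Finset.sum_nonneg fun k _ => pow_nonneg hc k
  have hSmono : ∀ {m n : ℕ}, m ≤ n → S m ≤ S n := fun h =>
    Finset.sum_le_sum_of_subset_of_nonneg (Finset.range_subset_range.mpr h)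
      (fun k _ _ => pow_nonneg hc k)
  have hSsucc : ∀ n, S (n + 1) = c * S n + 1 := fun n => geom_sum_succ
  have hxd0 : ∀ i, x i 0 - x' i 0 = 0 := fun i => by rw [hx0, hx0']; ring
  -- generic step
  have step : ∀ (m : ℕ) (F Ft : (Fin (m + 2) → ℝ) → ℝ),
      (∀ v w, |F v - F w| ≤ c * dist v w) →
      (∀ v, |Ft v - F v| ≤ L) →
      ∀ (a b : ℝ) (f g : Fin (m + 1) → ℝ) (n n' : ℕ),
      |a - b| ≤ S n * L → (∀ k : Fin (m + 1), |f k - g k| ≤ S n * L) →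
      n + 1 ≤ n' →
      |F (Fin.cons a f) - Ft (Fin.cons b g)| ≤ S n' * L := by
    intro m F Ft hF hFt a b f g n n' ha hf hn
    have hr : 0 ≤ S n * L := mul_nonneg (hS0 n) hL
    have h1 : |F (Fin.cons a f) - Ft (Fin.cons b g)| ≤ c * (S n * L) + L := by
      apply key_step7 hc hr F Ft hF hFt
      intro idx
      refine Fin.cases ?_ ?_ idx
      · simpa using ha
      · intro k; simpa using hf k
    refine h1.trans ?_
    calc c * (S n * L) + L = (c * S n + 1) * L := by ring
      _ = S (n + 1) * L := by rw [hSsucc]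
      _ ≤ S n' * L := mul_le_mul_of_nonneg_right (hSmono hn) hL
  have hka : ∀ k : Fin (α + 1), (k : ℕ) ≤ γ :=
    fun k => le_trans (Nat.lt_succ_iff.mp k.isLt) (le_max_left α β)
  have hkb : ∀ k : Fin (β + 1), (k : ℕ) ≤ γ :=
    fun k => le_trans (Nat.lt_succ_iff.mp k.isLt) (le_max_right α β)
  have H : ∀ j, (∀ i, |y i j - y' i j| ≤ S (i + j * (γ + 1)) * L) ∧
      (∀ i, |x i (j + 1) - x' i (j + 1)| ≤ S (i + j * (γ + 1) + 1) * L) := by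
    intro j
    induction j with
    | zero =>
      have hY0 : ∀ i, |y i 0 - y' i 0| ≤ S (i + 0 * (γ + 1)) * L := by
        intro i
        induction i with
        | zero =>
          rw [hy0, hy0', sub_self, abs_zero]
          exact mul_nonneg (hS0 _) hL
        | succ i ih =>
          rw [hy, hy']
          refine step β φ φt hφ hφt _ _ _ _ (i + 0 * (γ + 1)) _ ih ?_ (by omega)
          intro k
          rw [hxd0, abs_zero]
          exact mul_nonneg (hS0 _) hL
      refine ⟨hY0, fun i => ?_⟩
      rw [hx, hx']
      refine step α ψ ψt hψ hψt _ _ _ _ (i + 0 * (γ + 1)) _ (hY0 i) ?_ (by omega)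
      intro k
      rw [hxd0, abs_zero]
      exact mul_nonneg (hS0 _) hL
    | succ j ih =>
      have hmul : (j + 1) * (γ + 1) = j * (γ + 1) + γ + 1 := by ring
      have hY : ∀ i, |y i (j + 1) - y' i (j + 1)| ≤ S (i + (j + 1) * (γ + 1)) * L := by
        intro i
        induction i with
        | zero =>
          rw [hy0, hy0', sub_self, abs_zero]
          exact mul_nonneg (hS0 _) hL
        | succ i ihi =>
          rw [hy, hy']
          refine step β φ φt hφ hφt _ _ _ _ (i + (j + 1) * (γ + 1)) _ ihi ?_ (by omega)
          intro k
          refine (ih.2 (i + (k : ℕ))).trans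
            (mul_le_mul_of_nonneg_right (hSmono ?_) hL)
          have := hkb k
          omega
      refine ⟨hY, fun i => ?_⟩
      rw [hx, hx']
      refine step α ψ ψt hψ hψt _ _ _ _ (i + (j + 1) * (γ + 1)) _ (hY i) ?_ (by omega)
      intro k
      refine (ih.2 (i + (k : ℕ))).trans
        (mul_le_mul_of_nonneg_right (hSmono ?_) hL)
      have := hka k
      omega
  intro i j
  refine ⟨(H j).2 i, ((H j).1 (i + 1)).trans (le_of_eq ?_)⟩
  congr 2
  omega
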